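/- The greedy allocation stochastically dominates every feasible allocation in the tail-sum sense: for every feasible allocation x and every threshold t ∈ {1,…,T}, one has Σ_{j ≥ t} B*_j ≥ Σ_{j ≥ t} x_j. -/

import Mathlib

open Finset in
lemma greedy_tail_eq
    (T : ℕ) (C : Fin T → ℝ) (hC : ∀ i, 0 ≤ C i)
    (B : ℝ) (hB0 : 0 ≤ B)
    (Bstar : Fin T → ℝ)
    (hBstar : ∀ i, Bstar i =
      min (C i) (max 0 (B - ∑ j ∈ univ.filter (fun j => i < j), C j))) :
    ∀ m n, T - n = m →
      (∑ j ∈ univ.filter (fun j : Fin T => n ≤ j.val), Bstar j)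
        = min B (∑ j ∈ univ.filter (fun j : Fin T => n ≤ j.val), C j) := by
  intro m
  induction m with
  | zero =>
    intro n hn
    have hTn : T ≤ n := by omega
    have he : univ.filter (fun j : Fin T => n ≤ j.val) = ∅ := by
      ext j
      simp only [mem_filter, mem_univ, true_and, notMem_empty, iff_false, not_le]
      exact lt_of_lt_of_le j.isLt hTn
    simp [he, min_eq_right hB0]
  | succ m ih =>
    intro n hn
    have hnT : n < T := by omega
    set i : Fin T := ⟨n, hnT⟩ with hi
    have hsplit : univ.filter (fun j : Fin T => n ≤ j.val)
        = insert i (univ.filter (fun j : Fin T => n + 1 ≤ j.val)) := by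
      ext j
      simp only [mem_filter, mem_univ, true_and, mem_insert]
      constructor
      · intro h
        rcases eq_or_lt_of_le h with h' | h'
        · left; exact Fin.ext h'.symm
        · right; omega
      · rintro (rfl | h)
        · exact le_refl _
        · omega
    have hni : i ∉ univ.filter (fun j : Fin T => n + 1 ≤ j.val) := by
      simp [hi]
    have hstrict : univ.filter (fun j : Fin T => i < j)
        = univ.filter (fun j : Fin T => n + 1 ≤ j.val) := by
      apply filter_congr
      intro j _
      rw [Fin.lt_def, hi]
      exact Nat.lt_iff_add_one_le
    have hIH := ih (n + 1) (by omega)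
    set S : ℝ := ∑ j ∈ univ.filter (fun j : Fin T => n + 1 ≤ j.val), C j with hS
    have hS0 : 0 ≤ S := Finset.sum_nonneg fun j _ => hC j
    rw [hsplit, Finset.sum_insert hni, Finset.sum_insert hni, hIH,
      hBstar i, hstrict, ← hS]
    rcases le_total B S with h | h
    · rw [min_eq_left h, min_eq_left (h.trans (by linarith [hC i]))]
      have : max 0 (B - S) = 0 := max_eq_left (by linarith)
      rw [this, min_eq_right (hC i)]
      ring
    · rw [min_eq_right h]
      have : max 0 (B - S) = B - S := max_eq_right (by linarith)
      rw [this]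
      rcases le_total (C i) (B - S) with h2 | h2
      · rw [min_eq_left h2, min_eq_right (by linarith)]
      · rw [min_eq_right h2, min_eq_left (by linarith)]
        ring

open Finset in
/-- The greedy allocation stochastically dominates every
feasible allocation in the tail-sum sense: for every feasible x and every
threshold t, Σ_{j ≥ t} B*_j ≥ Σ_{j ≥ t} x_j. -/
theorem greedy_allocation_tail_dominance
    (T : ℕ) (hT : 1 ≤ T) (k C : Fin T → ℝ)
    (hk : StrictMono k) (hC : ∀ i, 0 ≤ C i)
    (B : ℝ) (hB0 : 0 ≤ B) (hBle : B ≤ ∑ i, C i)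
    (Bstar : Fin T → ℝ)
    (hBstar : ∀ i, Bstar i =
      min (C i) (max 0 (B - ∑ j ∈ univ.filter (fun j => i < j), C j))) :
    ∀ x : Fin T → ℝ, (∀ i, 0 ≤ x i ∧ x i ≤ C i) → (∑ i, x i = B) →
      ∀ t : Fin T,
        ∑ j ∈ univ.filter (fun j => t ≤ j), x j ≤
        ∑ j ∈ univ.filter (fun j => t ≤ j), Bstar j := by
  intro x hx hsum t
  have hfe : univ.filter (fun j : Fin T => t ≤ j)
      = univ.filter (fun j : Fin T => t.val ≤ j.val) := by
    apply filter_congr; intro j _; rw [Fin.le_def]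
  rw [hfe, greedy_tail_eq T C hC B hB0 Bstar hBstar (T - t.val) t.val rfl]
  apply le_min
  · rw [← hsum]
    apply Finset.sum_le_sum_of_subset_of_nonneg (subset_univ _)
    intro j _ _; exact (hx j).1
  · exact Finset.sum_le_sum fun j _ => (hx j).2
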